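/- Let ω_max, T > 0 and let μ satisfy 0 < μ < min(1/(4·T·ω_max), T·ω_max/4). Let ω : ℝ → ℝ³ be continuous with |ω(s)| ≤ ω_max, and let a : ℝ → ℝ³ be differentiable with |a(s)| = 1 and a'(s) = a(s) × ω(s) for all s. Let x ∈ ℝ³ be a unit vector and t ∈ ℝ such that (1/T)·∫_t^{t+T} (a(s)ᵀx)² ds ≥ 1 − μ. Then the function s ↦ a(s)ᵀx has constant (strict) sign on [t, t+T], and there is σ ∈ {+1, −1} such that |a(s) − σ·x|² ≤ 4·√(T·ω_max·μ) for all s ∈ [t, t+T]. -/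

import Mathlib

open Matrix

noncomputable section

/-- Cross product on ℝ³. -/
def cross3 (x y : Fin 3 → ℝ) : Fin 3 → ℝ :=
  ![x 1 * y 2 - x 2 * y 1, x 2 * y 0 - x 0 * y 2, x 0 * y 1 - x 1 * y 0]

/-- Euclidean norm on ℝ³. -/
def enorm3 (x : Fin 3 → ℝ) : ℝ := Real.sqrt (∑ i, (x i) ^ 2)

lemma sum_sq_nonneg3 (u : Fin 3 → ℝ) : 0 ≤ ∑ i, (u i)^2 :=
  Finset.sum_nonneg fun i _ => sq_nonneg _

lemma dot_sq_le3 (u v : Fin 3 → ℝ) :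
    (u ⬝ᵥ v)^2 ≤ (∑ i, (u i)^2) * (∑ i, (v i)^2) := by
  simp only [dotProduct, Fin.sum_univ_three]
  nlinarith [sq_nonneg (u 0*v 1 - u 1*v 0), sq_nonneg (u 0*v 2 - u 2*v 0),
    sq_nonneg (u 1*v 2 - u 2*v 1)]

lemma cross_sum_sq_le3 (u v : Fin 3 → ℝ) :
    (∑ i, (cross3 u v i)^2) ≤ (∑ i, (u i)^2) * (∑ i, (v i)^2) := by
  simp only [cross3, Fin.sum_univ_three, Matrix.cons_val_zero, Matrix.cons_val_one,
    Matrix.head_cons, Matrix.cons_val_two, Matrix.tail_cons]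
  nlinarith [sq_nonneg (u 0*v 0 + u 1*v 1 + u 2*v 2)]

lemma integral_linear3 (u v c b : ℝ) :
    (∫ s in u..v, (c - b * s)) = c*(v-u) - b*(v^2-u^2)/2 := by
  have h : IntervalIntegrable (fun s : ℝ => b * s) MeasureTheory.volume u v :=
    (continuous_const.mul continuous_id).intervalIntegrable _ _
  rw [intervalIntegral.integral_sub intervalIntegrable_const h,
    intervalIntegral.integral_const_mul]
  simp [integral_id]
  ring

lemma integral_sub_interval_le3 (g : ℝ → ℝ) (hgc : Continuous g)
    (hg0 : ∀ s, 0 ≤ g s) {t u v w : ℝ} (h1 : t ≤ u) (h2 : u ≤ v) (h3 : v ≤ w) :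
    (∫ s in u..v, g s) ≤ ∫ s in t..w, g s := by
  have hi : ∀ p q : ℝ, IntervalIntegrable g MeasureTheory.volume p q :=
    fun p q => hgc.intervalIntegrable p q
  have e1 := intervalIntegral.integral_add_adjacent_intervals (hi t u) (hi u w)
  have e2 := intervalIntegral.integral_add_adjacent_intervals (hi u v) (hi v w)
  have n1 : 0 ≤ ∫ s in t..u, g s := intervalIntegral.integral_nonneg h1 fun s _ => hg0 s
  have n2 : 0 ≤ ∫ s in v..w, g s := intervalIntegral.integral_nonneg h3 fun s _ => hg0 s
  linarith

lemma key_lower_bound (ωmax T μ t : ℝ) (hωmax : 0 < ωmax) (hT : 0 < T) (hμ0 : 0 < μ)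
    (hμb : μ < T * ωmax / 4)
    (f : ℝ → ℝ) (hfc : Continuous f) (hf1 : ∀ s, |f s| ≤ 1)
    (hlipabs : ∀ u v : ℝ, |f u| - |f v| ≤ ωmax * |u - v|)
    (hIg : (∫ s in t..(t+T), (1 - f s^2)) ≤ μ * T) :
    ∀ s₁ ∈ Set.Icc t (t+T), 1 - |f s₁| ≤ 2 * Real.sqrt (T*ωmax*μ) := by
  set ε := Real.sqrt (T*ωmax*μ) with hεdef
  have hTωμ : 0 < T*ωmax*μ := by positivity
  have hε2 : ε^2 = T*ωmax*μ := Real.sq_sqrt hTωμ.le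
  have hεpos : 0 < ε := Real.sqrt_pos.mpr hTωμ
  clear_value ε
  set g : ℝ → ℝ := fun s => 1 - f s ^ 2 with hgdef
  have hgc : Continuous g := continuous_const.sub (hfc.pow 2)
  have hg0 : ∀ s, 0 ≤ g s := by
    intro s
    have h := hf1 s
    simp only [hgdef]
    nlinarith [sq_abs (f s), abs_nonneg (f s)]
  intro s₁ hs₁
  by_contra hcon
  push_neg at hcon
  set δ := 1 - |f s₁| with hδdef
  clear_value δ
  have hδpos : 0 < δ := lt_trans (by positivity) hcon
  set L := min (T/2) (δ/ωmax) with hLdef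
  clear_value L
  have hL0 : 0 < L := by rw [hLdef]; exact lt_min (by linarith) (by positivity)
  have hLT : L ≤ T/2 := by rw [hLdef]; exact min_le_left _ _
  have hLδ : ωmax * L ≤ δ := by
    have h : L ≤ δ/ωmax := by rw [hLdef]; exact min_le_right (T/2) (δ/ωmax)
    calc ωmax * L ≤ ωmax * (δ/ωmax) := mul_le_mul_of_nonneg_left h hωmax.le
      _ = δ := by field_simp
  have hbound : δ * L - ωmax * L^2/2 ≤ μ * T := by
    rcases le_or_gt s₁ (t + T/2) with hside | hside
    · -- right interval [s₁, s₁+L]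
      have hv : s₁ + L ≤ t + T := by linarith
      have hpt : ∀ s ∈ Set.Icc s₁ (s₁+L), δ - ωmax*(s - s₁) ≤ g s := by
        intro s hs
        have h1 := hlipabs s s₁
        rw [abs_of_nonneg (by linarith [hs.1] : (0:ℝ) ≤ s - s₁)] at h1
        have h3 : 1 - |f s| ≤ g s := by
          simp only [hgdef]
          nlinarith [sq_abs (f s), abs_nonneg (f s), hf1 s]
        linarith
      have hmono : (∫ s in s₁..(s₁+L), (δ - ωmax*(s - s₁))) ≤ ∫ s in s₁..(s₁+L), g s :=
        intervalIntegral.integral_mono_on (by linarith)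
          ((continuous_const.sub (continuous_const.mul (continuous_id.sub continuous_const))).intervalIntegrable _ _)
          (hgc.intervalIntegrable _ _) hpt
      have hval : (∫ s in s₁..(s₁+L), (δ - ωmax*(s - s₁))) = δ*L - ωmax*L^2/2 := by
        have he : (fun s => δ - ωmax*(s - s₁)) = fun s => (δ + ωmax*s₁) - ωmax*s := by
          funext s; ring
        calc (∫ s in s₁..(s₁+L), (δ - ωmax*(s - s₁)))
            = ∫ s in s₁..(s₁+L), ((δ + ωmax*s₁) - ωmax*s) := by rw [← he]
          _ = δ*L - ωmax*L^2/2 := by rw [integral_linear3]; ring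
      have hsub := integral_sub_interval_le3 g hgc hg0 hs₁.1 (by linarith : s₁ ≤ s₁ + L) hv
      linarith
    · -- left interval [s₁-L, s₁]
      have hu : t ≤ s₁ - L := by linarith
      have hpt : ∀ s ∈ Set.Icc (s₁-L) s₁, δ - ωmax*(s₁ - s) ≤ g s := by
        intro s hs
        have h1 := hlipabs s s₁
        rw [abs_of_nonpos (by linarith [hs.2] : s - s₁ ≤ (0:ℝ))] at h1
        have h3 : 1 - |f s| ≤ g s := by
          simp only [hgdef]
          nlinarith [sq_abs (f s), abs_nonneg (f s), hf1 s]
        linarith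
      have hmono : (∫ s in (s₁-L)..s₁, (δ - ωmax*(s₁ - s))) ≤ ∫ s in (s₁-L)..s₁, g s :=
        intervalIntegral.integral_mono_on (by linarith)
          ((continuous_const.sub (continuous_const.mul (continuous_const.sub continuous_id))).intervalIntegrable _ _)
          (hgc.intervalIntegrable _ _) hpt
      have hval : (∫ s in (s₁-L)..s₁, (δ - ωmax*(s₁ - s))) = δ*L - ωmax*L^2/2 := by
        have he : (fun s => δ - ωmax*(s₁ - s)) = fun s => (δ - ωmax*s₁) - (-ωmax)*s := by
          funext s; ring
        calc (∫ s in (s₁-L)..s₁, (δ - ωmax*(s₁ - s)))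
            = ∫ s in (s₁-L)..s₁, ((δ - ωmax*s₁) - (-ωmax)*s) := by rw [← he]
          _ = δ*L - ωmax*L^2/2 := by rw [integral_linear3]; ring
      have hsub := integral_sub_interval_le3 g hgc hg0 hu (by linarith : s₁ - L ≤ s₁) hs₁.2
      linarith
  rcases le_total (T/2) (δ/ωmax) with hc | hc
  · have hLeq : L = T/2 := by rw [hLdef]; exact min_eq_left hc
    have hδbig : T/2 * ωmax ≤ δ := (le_div_iff₀ hωmax).mp hc
    have hε2μ : 2*μ < ε := by
      have h : (2*μ)^2 < ε^2 := by
        rw [hε2]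
        nlinarith [mul_pos hμ0 (show (0:ℝ) < T*ωmax/4 - μ by linarith)]
      exact lt_of_pow_lt_pow_left₀ 2 hεpos.le h
    rw [hLeq] at hbound
    have hmul := mul_le_mul_of_nonneg_right hδbig (by linarith : (0:ℝ) ≤ T/4)
    have hp := mul_pos (show (0:ℝ) < δ - 4*μ by linarith) hT
    nlinarith [hbound, hmul, hp]
  · have hLeq : L = δ/ωmax := by rw [hLdef]; exact min_eq_right hc
    have hωL : ωmax * L = δ := by rw [hLeq]; field_simp
    have h2 : ωmax * L^2 = δ * L := by rw [← hωL]; ring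
    have h1 : δ * L ≤ 2*(μ*T) := by linarith
    have hδ2 : δ*δ ≤ 2*ωmax*μ*T := by
      have he : δ*δ = ωmax*(δ*L) := by rw [← hωL]; ring
      have := mul_le_mul_of_nonneg_left h1 hωmax.le
      linarith
    have hsq : (2*ε)*(2*ε) < δ*δ := mul_lt_mul'' hcon hcon (by positivity) (by positivity)
    nlinarith [hδ2, hsq, hε2, hTωμ]
/-- if the average of `(a(s)ᵀx)²` over `[t, t+T]` is at least `1 − μ`
with `μ` small, then `s ↦ a(s)ᵀx` has constant strict sign on `[t, t+T]` and `a`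
stays `4√(Tω_max μ)`-close (in squared norm) to `σx` for a sign `σ = ±1`. -/
theorem measurement_close_to_fixed_vector
    (ωmax T μ : ℝ) (hωmax : 0 < ωmax) (hT : 0 < T)
    (hμ0 : 0 < μ) (hμ1 : μ < min (1 / (4 * T * ωmax)) (T * ωmax / 4))
    (ω : ℝ → Fin 3 → ℝ) (hωc : Continuous ω) (hωb : ∀ s, enorm3 (ω s) ≤ ωmax)
    (a : ℝ → Fin 3 → ℝ) (hau : ∀ s, enorm3 (a s) = 1)
    (had : ∀ s, HasDerivAt a (cross3 (a s) (ω s)) s)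
    (x : Fin 3 → ℝ) (hx : enorm3 x = 1) (t : ℝ)
    (hint : 1 - μ ≤ (1 / T) * ∫ s in t..(t + T), (a s ⬝ᵥ x) ^ 2) :
    ((∀ s ∈ Set.Icc t (t + T), 0 < a s ⬝ᵥ x) ∨ (∀ s ∈ Set.Icc t (t + T), a s ⬝ᵥ x < 0)) ∧
      ∃ σ : ℝ, (σ = 1 ∨ σ = -1) ∧
        ∀ s ∈ Set.Icc t (t + T), enorm3 (a s - σ • x) ^ 2 ≤ 4 * Real.sqrt (T * ωmax * μ) := by
  obtain ⟨hμa, hμb⟩ := lt_min_iff.mp hμ1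
  have hSa : ∀ s, (∑ i, (a s i)^2) = 1 := fun s => Real.sqrt_eq_one.mp (hau s)
  have hSx : (∑ i, (x i)^2) = 1 := Real.sqrt_eq_one.mp hx
  have hSω : ∀ s, (∑ i, (ω s i)^2) ≤ ωmax^2 := by
    intro s
    have h2 : Real.sqrt (∑ i, (ω s i)^2) ^ 2 ≤ ωmax ^ 2 :=
      pow_le_pow_left₀ (Real.sqrt_nonneg _) (hωb s) 2
    rwa [Real.sq_sqrt (sum_sq_nonneg3 _)] at h2
  have hfd : ∀ s, HasDerivAt (fun τ => a τ ⬝ᵥ x) (cross3 (a s) (ω s) ⬝ᵥ x) s := by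
    intro s
    have hi : ∀ i, HasDerivAt (fun τ => a τ i) (cross3 (a s) (ω s) i) s :=
      hasDerivAt_pi.mp (had s)
    have h : HasDerivAt (fun τ => ∑ i, a τ i * x i)
        (∑ i, cross3 (a s) (ω s) i * x i) s :=
      HasDerivAt.fun_sum fun i _ => (hi i).mul_const (x i)
    simpa [dotProduct] using h
  have hfc : Continuous (fun τ => a τ ⬝ᵥ x) := by
    rw [continuous_iff_continuousAt]; exact fun s => (hfd s).continuousAt
  have hf1 : ∀ s, |a s ⬝ᵥ x| ≤ 1 := by
    intro s
    have h := dot_sq_le3 (a s) x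
    rw [hSa s, hSx] at h
    nlinarith [abs_nonneg (a s ⬝ᵥ x), sq_abs (a s ⬝ᵥ x)]
  have hf'b : ∀ s, |cross3 (a s) (ω s) ⬝ᵥ x| ≤ ωmax := by
    intro s
    have h1 := dot_sq_le3 (cross3 (a s) (ω s)) x
    have h2 := cross_sum_sq_le3 (a s) (ω s)
    rw [hSx, mul_one] at h1
    rw [hSa s, one_mul] at h2
    have h3 := hSω s
    nlinarith [abs_nonneg (cross3 (a s) (ω s) ⬝ᵥ x), sq_abs (cross3 (a s) (ω s) ⬝ᵥ x),
      sum_sq_nonneg3 (cross3 (a s) (ω s))]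
  have hlip : ∀ u v : ℝ, |a v ⬝ᵥ x - a u ⬝ᵥ x| ≤ ωmax * |v - u| := by
    have key : ∀ u v : ℝ, u < v → |a v ⬝ᵥ x - a u ⬝ᵥ x| ≤ ωmax * (v - u) := by
      intro u v huv
      obtain ⟨c, _, hc⟩ := exists_hasDerivAt_eq_slope (fun τ => a τ ⬝ᵥ x) _ huv
        hfc.continuousOn (fun y _ => hfd y)
      have hb := hf'b c
      rw [hc, abs_div, abs_of_pos (by linarith : (0:ℝ) < v - u), div_le_iff₀ (by linarith)] at hb
      linarith [hb]
    intro u v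
    rcases lt_trichotomy u v with h | h | h
    · rw [abs_of_pos (sub_pos.mpr h)]
      exact key u v h
    · simp [h]
    · rw [abs_sub_comm, abs_sub_comm v u, abs_of_pos (sub_pos.mpr h)]
      exact key v u h
  have hlipabs : ∀ u v : ℝ, |a u ⬝ᵥ x| - |a v ⬝ᵥ x| ≤ ωmax * |u - v| :=
    fun u v => le_trans (abs_sub_abs_le_abs_sub _ _) (hlip v u)
  have hf2i : ∀ u v : ℝ, IntervalIntegrable (fun s => (a s ⬝ᵥ x)^2) MeasureTheory.volume u v :=
    fun u v => (hfc.pow 2).intervalIntegrable u v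
  have hIg : (∫ s in t..(t+T), (1 - (a s ⬝ᵥ x)^2)) ≤ μ * T := by
    have hI : (1-μ)*T ≤ ∫ s in t..(t+T), (a s ⬝ᵥ x)^2 := by
      have h := mul_le_mul_of_nonneg_right hint hT.le
      have h2 : (1/T) * (∫ s in t..(t+T), (a s ⬝ᵥ x)^2) * T
          = ∫ s in t..(t+T), (a s ⬝ᵥ x)^2 := by field_simp
      linarith
    have heq : (∫ s in t..(t+T), (1 - (a s ⬝ᵥ x)^2))
        = (∫ s in t..(t+T), (1:ℝ)) - ∫ s in t..(t+T), (a s ⬝ᵥ x)^2 :=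
      intervalIntegral.integral_sub intervalIntegrable_const (hf2i t (t+T))
    rw [heq]
    simp only [intervalIntegral.integral_const, smul_eq_mul, mul_one]
    linarith
  have hkey := key_lower_bound ωmax T μ t hωmax hT hμ0 hμb (fun τ => a τ ⬝ᵥ x)
    hfc hf1 hlipabs hIg
  set ε := Real.sqrt (T*ωmax*μ) with hεdef
  have hTωμ : 0 < T*ωmax*μ := by positivity
  have hε2 : ε^2 = T*ωmax*μ := Real.sq_sqrt hTωμ.le
  have hεpos : 0 < ε := Real.sqrt_pos.mpr hTωμ
  have hεhalf : ε < 1/2 := by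
    have h14 : T*ωmax*μ < 1/4 := by
      have hlt : T*ωmax*μ < T*ωmax*(1/(4*T*ωmax)) :=
        mul_lt_mul_of_pos_left hμa (by positivity)
      have heq : T*ωmax*(1/(4*T*ωmax)) = 1/4 := by field_simp
      linarith
    nlinarith [sq_nonneg (ε - 1/2)]
  have hlow : ∀ s ∈ Set.Icc t (t+T), 1 - 2*ε ≤ |a s ⬝ᵥ x| := by
    intro s hs
    have h := hkey s hs
    linarith
  have hne : ∀ s ∈ Set.Icc t (t+T), a s ⬝ᵥ x ≠ 0 := by
    intro s hs h0
    have h := hlow s hs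
    rw [h0, abs_zero] at h
    linarith
  have htmem : t ∈ Set.Icc t (t+T) := ⟨le_refl _, by linarith⟩
  have hn2 : ∀ y : Fin 3 → ℝ, enorm3 y ^ 2 = ∑ i, (y i)^2 :=
    fun y => Real.sq_sqrt (sum_sq_nonneg3 y)
  have hfinal : ∀ (σ : ℝ), σ = 1 ∨ σ = -1 → ∀ s ∈ Set.Icc t (t+T),
      1 - 2*ε ≤ σ * (a s ⬝ᵥ x) → enorm3 (a s - σ • x) ^ 2 ≤ 4 * ε := by
    intro σ hσ s hs hfs
    rw [hn2]
    have ha' := hSa s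
    have hx' := hSx
    simp only [Fin.sum_univ_three] at ha' hx' ⊢
    simp only [Pi.sub_apply, Pi.smul_apply, smul_eq_mul]
    have hfe : a s ⬝ᵥ x = a s 0 * x 0 + a s 1 * x 1 + a s 2 * x 2 := by
      simp [dotProduct, Fin.sum_univ_three]
    rw [hfe] at hfs
    have hσ2 : σ^2 = 1 := by rcases hσ with h | h <;> simp [h]
    nlinarith [hfs, ha', hx', hσ2]
  rcases (hne t htmem).lt_or_gt with hneg | hpos
  · -- negative sign
    have hall : ∀ s ∈ Set.Icc t (t+T), a s ⬝ᵥ x < 0 := by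
      intro s hs
      rcases (hne s hs).lt_or_gt with hn | hp
      · exact hn
      · exfalso
        have hiv := intermediate_value_Icc hs.1 (hfc.continuousOn (s := Set.Icc t s))
        have h0 : (0:ℝ) ∈ Set.Icc (a t ⬝ᵥ x) (a s ⬝ᵥ x) := ⟨hneg.le, hp.le⟩
        obtain ⟨c, hc, hc0⟩ := hiv h0
        exact hne c ⟨hc.1, le_trans hc.2 hs.2⟩ hc0
    refine ⟨Or.inr hall, -1, Or.inr rfl, ?_⟩
    intro s hs
    apply hfinal (-1) (Or.inr rfl) s hs
    have h := hlow s hs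
    rw [abs_of_neg (hall s hs)] at h
    linarith
  · -- positive sign
    have hall : ∀ s ∈ Set.Icc t (t+T), 0 < a s ⬝ᵥ x := by
      intro s hs
      rcases (hne s hs).lt_or_gt with hn | hp
      · exfalso
        have hiv := intermediate_value_Icc' hs.1 (hfc.continuousOn (s := Set.Icc t s))
        have h0 : (0:ℝ) ∈ Set.Icc (a s ⬝ᵥ x) (a t ⬝ᵥ x) := ⟨hn.le, hpos.le⟩
        obtain ⟨c, hc, hc0⟩ := hiv h0
        exact hne c ⟨hc.1, le_trans hc.2 hs.2⟩ hc0
      · exact hp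
    refine ⟨Or.inl hall, 1, Or.inl rfl, ?_⟩
    intro s hs
    apply hfinal 1 (Or.inl rfl) s hs
    have h := hlow s hs
    rw [abs_of_pos (hall s hs)] at h
    linarith

end
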